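/- Let α be a type with decidable equality, let n : ℕ, let x, y : Fin n → α, and let i : Fin n be an index with E(x) i ≠ E(y) i. Then prev_x(i) exists or prev_y(i) exists; moreover, if both prev_x(i) and prev_y(i) exist, then prev_x(i) ≠ prev_y(i). -/
import Mathlib


/-- The predecessor occurrence of position `i` in `x`: the largest `j < i`
with `x j = x i`, as an element of `WithBot (Fin n)` (`⊥` when none exists). -/
def prevOcc {α : Type*} [DecidableEq α] {n : ℕ} (x : Fin n → α) (i : Fin n) :
    WithBot (Fin n) :=
  (Finset.univ.filter (fun j : Fin n => j < i ∧ x j = x i)).max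

/-- Baker's encoding of a parameterized string. -/
def encode {α : Type*} [DecidableEq α] {n : ℕ} (x : Fin n → α) (i : Fin n) : ℕ :=
  match prevOcc x i with
  | none => 0
  | some j => (i : ℕ) - (j : ℕ)

lemma prevOcc_lt {α : Type*} [DecidableEq α] {n : ℕ} (x : Fin n → α) (i j : Fin n)
    (hj : prevOcc x i = (j : WithBot (Fin n))) : j < i := by
  have := Finset.mem_of_max hj
  simp only [Finset.mem_filter] at this
  exact this.2.1

theorem prev_exists_of_encode_ne {α : Type*} [DecidableEq α] (n : ℕ)
    (x y : Fin n → α) (i : Fin n) (h : encode x i ≠ encode y i) :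
    (prevOcc x i ≠ ⊥ ∨ prevOcc y i ≠ ⊥) ∧
      (prevOcc x i ≠ ⊥ → prevOcc y i ≠ ⊥ → prevOcc x i ≠ prevOcc y i) := by
  constructor
  · by_contra hc
    push_neg at hc
    obtain ⟨h1, h2⟩ := hc
    apply h
    unfold encode
    rw [h1, h2]
  · intro hx hy hne
    obtain ⟨j, hj⟩ := Option.ne_none_iff_exists'.mp hx
    obtain ⟨k, hk⟩ := Option.ne_none_iff_exists'.mp hy
    have hji := prevOcc_lt x i j hj
    have hki := prevOcc_lt y i k hk
    apply h
    unfold encode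
    rw [hj, hk]
    rw [hj, hk] at hne
    have : j = k := by exact WithBot.coe_inj.mp hne
    rw [this]
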